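/- Suppose z : [0,∞) → ℝ is differentiable, z(t) > 0 for all t, and z' = -z³(θ_1 z - θ_2)e^{-θ_3 z}. Let ξ_3(t) = -1/(2 z(t)²). Then ξ_3'(t) = z'(t)/z(t)³, and e^{θ_3 z(0)} ξ_3'(t) + θ_1 θ_3 ξ_1(t) ξ_3'(t) + θ_2 θ_3 ξ_2(t) ξ_3'(t) + θ_1 z(t) - θ_2 = 0 for all t, where ξ_1(t) = -∫₀ᵗ z⁴ and ξ_2(t) = ∫₀ᵗ z³. -/

import Mathlib

open Real in
theorem xi3_identity (θ1 θ2 θ3 : ℝ) (z : ℝ → ℝ) (hzpos : ∀ t ≥ 0, 0 < z t)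
    (hz : ∀ t ≥ 0, HasDerivAt z (-(z t) ^ 3 * (θ1 * z t - θ2) * exp (-θ3 * z t)) t)
    (ξ1 ξ2 ξ3 : ℝ → ℝ)
    (hξ1 : ∀ t, ξ1 t = -∫ s in (0:ℝ)..t, (z s) ^ 4)
    (hξ2 : ∀ t, ξ2 t = ∫ s in (0:ℝ)..t, (z s) ^ 3)
    (hξ3 : ∀ t, ξ3 t = -(1 / (2 * (z t) ^ 2))) :
    (∀ t ≥ 0, deriv ξ3 t = deriv z t / (z t) ^ 3) ∧
    ∀ t ≥ 0,
      exp (θ3 * z 0) * deriv ξ3 t + θ1 * θ3 * ξ1 t * deriv ξ3 t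
        + θ2 * θ3 * ξ2 t * deriv ξ3 t + θ1 * z t - θ2 = 0 := by
  have hξ3fun : ξ3 = fun t => -(1 / (2 * (z t) ^ 2)) := funext hξ3
  have hξ1fun : ξ1 = fun t => -∫ s in (0:ℝ)..t, (z s) ^ 4 := funext hξ1
  have hξ2fun : ξ2 = fun t => ∫ s in (0:ℝ)..t, (z s) ^ 3 := funext hξ2
  -- continuity of z on [0,∞)
  have hzc : ContinuousOn z (Set.Ici 0) := fun x hx =>
    ((hz x hx).continuousAt).continuousWithinAt
  -- derivative of ξ3
  have hd3 : ∀ t ≥ 0, HasDerivAt ξ3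
      ((-(z t) ^ 3 * (θ1 * z t - θ2) * exp (-θ3 * z t)) / (z t) ^ 3) t := by
    intro t ht
    have hz0 : z t ≠ 0 := (hzpos t ht).ne'
    have h1 : HasDerivAt (fun s => 2 * (z s) ^ 2)
        (2 * ((2:ℕ) * z t ^ (2-1) * (-(z t) ^ 3 * (θ1 * z t - θ2) * exp (-θ3 * z t)))) t :=
      ((hz t ht).pow 2).const_mul 2
    have h2 : HasDerivAt (fun s => -(1 / (2 * (z s) ^ 2)))
        (-(-(2 * ((2:ℕ) * z t ^ (2-1) * (-(z t) ^ 3 * (θ1 * z t - θ2) * exp (-θ3 * z t)))) /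
          (2 * (z t) ^ 2) ^ 2)) t := by
      rw [show (fun s => -(1 / (2 * z s ^ 2))) = -(fun s => 2 * z s ^ 2)⁻¹ from
        funext fun s => congrArg Neg.neg (one_div _)]
      exact (h1.inv (by positivity)).neg
    rw [hξ3fun]
    convert h2 using 1
    field_simp
    ring
  have hderiv3 : ∀ t ≥ 0, deriv ξ3 t =
      (-(z t) ^ 3 * (θ1 * z t - θ2) * exp (-θ3 * z t)) / (z t) ^ 3 :=
    fun t ht => (hd3 t ht).deriv
  constructor
  · intro t ht
    rw [hderiv3 t ht, (hz t ht).deriv]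
  · intro t ht
    -- integrability
    have hint4 : IntervalIntegrable (fun s => (z s) ^ 4) MeasureTheory.volume 0 t := by
      apply ContinuousOn.intervalIntegrable
      apply ((hzc.mono _).pow 4)
      rw [Set.uIcc_of_le ht]
      exact fun x hx => hx.1
    have hint3 : IntervalIntegrable (fun s => (z s) ^ 3) MeasureTheory.volume 0 t := by
      apply ContinuousOn.intervalIntegrable
      apply ((hzc.mono _).pow 3)
      rw [Set.uIcc_of_le ht]
      exact fun x hx => hx.1
    -- the conserved quantity
    have key : exp (θ3 * z t) = exp (θ3 * z 0) + θ1 * θ3 * ξ1 t + θ2 * θ3 * ξ2 t := by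
      set F : ℝ → ℝ := fun x => exp (θ3 * z x) - θ1 * θ3 * ξ1 x - θ2 * θ3 * ξ2 x with hF
      have hcont : ContinuousOn F (Set.Icc 0 t) := by
        have hIcc : Set.Icc (0:ℝ) t ⊆ Set.Ici 0 := fun x hx => hx.1
        have c1 : ContinuousOn (fun x => exp (θ3 * z x)) (Set.Icc 0 t) :=
          (Real.continuous_exp.comp_continuousOn ((continuousOn_const.mul hzc).mono hIcc))
        have c2 : ContinuousOn ξ1 (Set.Icc 0 t) := by
          rw [hξ1fun]
          have := (intervalIntegral.continuousOn_primitive_interval'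
            (μ := MeasureTheory.volume) hint4 Set.left_mem_uIcc).neg
          rwa [Set.uIcc_of_le ht] at this
        have c3 : ContinuousOn ξ2 (Set.Icc 0 t) := by
          rw [hξ2fun]
          have := intervalIntegral.continuousOn_primitive_interval'
            (μ := MeasureTheory.volume) hint3 Set.left_mem_uIcc
          rwa [Set.uIcc_of_le ht] at this
        exact (c1.sub (continuousOn_const.mul c2)).sub (continuousOn_const.mul c3)
      have hderF : ∀ x ∈ Set.Ico 0 t, HasDerivWithinAt F 0 (Set.Ici x) x := by
        intro x hx
        have hx0 : (0:ℝ) ≤ x := hx.1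
        have hz0 : z x ≠ 0 := (hzpos x hx0).ne'
        have hintx4 : IntervalIntegrable (fun s => (z s) ^ 4) MeasureTheory.volume 0 x := by
          apply ContinuousOn.intervalIntegrable
          apply ((hzc.mono _).pow 4)
          rw [Set.uIcc_of_le hx0]
          exact fun y hy => hy.1
        have hintx3 : IntervalIntegrable (fun s => (z s) ^ 3) MeasureTheory.volume 0 x := by
          apply ContinuousOn.intervalIntegrable
          apply ((hzc.mono _).pow 3)
          rw [Set.uIcc_of_le hx0]
          exact fun y hy => hy.1
        have hsub : Set.Ioi x ⊆ Set.Ici (0:ℝ) := fun y hy => le_of_lt (lt_of_le_of_lt hx0 hy)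
        have hmeas4 : StronglyMeasurableAtFilter (fun s => (z s) ^ 4)
            (nhdsWithin x (Set.Ioi x)) :=
          ((hzc.mono hsub).pow 4).stronglyMeasurableAtFilter_nhdsWithin
            measurableSet_Ioi x
        have hmeas3 : StronglyMeasurableAtFilter (fun s => (z s) ^ 3)
            (nhdsWithin x (Set.Ioi x)) :=
          ((hzc.mono hsub).pow 3).stronglyMeasurableAtFilter_nhdsWithin
            measurableSet_Ioi x
        have hcw4 : ContinuousWithinAt (fun s => (z s) ^ 4) (Set.Ioi x) x :=
          ((((hz x hx0).continuousAt).continuousWithinAt).pow 4 : ContinuousWithinAt _ (Set.Ioi x) x)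
        have hcw3 : ContinuousWithinAt (fun s => (z s) ^ 3) (Set.Ioi x) x :=
          ((((hz x hx0).continuousAt).continuousWithinAt).pow 3 : ContinuousWithinAt _ (Set.Ioi x) x)
        have d1 : HasDerivWithinAt ξ1 (-(z x) ^ 4) (Set.Ici x) x := by
          rw [hξ1fun]
          exact (intervalIntegral.integral_hasDerivWithinAt_right hintx4 hmeas4 hcw4).neg
        have d2 : HasDerivWithinAt ξ2 ((z x) ^ 3) (Set.Ici x) x := by
          rw [hξ2fun]
          exact intervalIntegral.integral_hasDerivWithinAt_right hintx3 hmeas3 hcw3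
        have dexp : HasDerivAt (fun s => exp (θ3 * z s))
            (exp (θ3 * z x) * (θ3 * (-(z x) ^ 3 * (θ1 * z x - θ2) * exp (-θ3 * z x)))) x :=
          ((hz x hx0).const_mul θ3).exp
        have hexpmul : exp (θ3 * z x) * exp (-θ3 * z x) = 1 := by
          rw [← Real.exp_add]; ring_nf; exact Real.exp_zero
        have : HasDerivWithinAt F
            (exp (θ3 * z x) * (θ3 * (-(z x) ^ 3 * (θ1 * z x - θ2) * exp (-θ3 * z x)))
              - θ1 * θ3 * (-(z x) ^ 4) - θ2 * θ3 * ((z x) ^ 3)) (Set.Ici x) x :=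
          ((dexp.hasDerivWithinAt).sub ((d1.const_mul _))).sub (d2.const_mul _)
        convert this using 1
        have : exp (θ3 * z x) * (θ3 * (-(z x) ^ 3 * (θ1 * z x - θ2) * exp (-θ3 * z x)))
            = θ3 * (-(z x) ^ 3 * (θ1 * z x - θ2)) := by
          rw [show exp (θ3 * z x) * (θ3 * (-(z x) ^ 3 * (θ1 * z x - θ2) * exp (-θ3 * z x)))
            = (exp (θ3 * z x) * exp (-θ3 * z x)) * (θ3 * (-(z x) ^ 3 * (θ1 * z x - θ2))) by ring,
            hexpmul, one_mul]
        rw [this]; ring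
      have hFt : F t = F 0 :=
        constant_of_has_deriv_right_zero hcont hderF t (Set.right_mem_Icc.2 ht)
      have h10 : ξ1 0 = 0 := by rw [hξ1]; simp
      have h20 : ξ2 0 = 0 := by rw [hξ2]; simp
      have : exp (θ3 * z t) - θ1 * θ3 * ξ1 t - θ2 * θ3 * ξ2 t = exp (θ3 * z 0) := by
        simpa [hF, h10, h20] using hFt
      linarith
    -- finish
    have hz0 : z t ≠ 0 := (hzpos t ht).ne'
    have hD : deriv ξ3 t = -(θ1 * z t - θ2) * exp (-θ3 * z t) := by
      rw [hderiv3 t ht]; field_simp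
    have hexpmul : exp (θ3 * z t) * exp (-θ3 * z t) = 1 := by
      rw [← Real.exp_add]; ring_nf; exact Real.exp_zero
    have : exp (θ3 * z 0) * deriv ξ3 t + θ1 * θ3 * ξ1 t * deriv ξ3 t
        + θ2 * θ3 * ξ2 t * deriv ξ3 t
        = (exp (θ3 * z 0) + θ1 * θ3 * ξ1 t + θ2 * θ3 * ξ2 t) * deriv ξ3 t := by ring
    rw [this, ← key, hD,
      show Real.exp (θ3 * z t) * (-(θ1 * z t - θ2) * Real.exp (-θ3 * z t))
        = (Real.exp (θ3 * z t) * Real.exp (-θ3 * z t)) * (-(θ1 * z t - θ2)) from by ring,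
      hexpmul]
    ring
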